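/- Let g = 5, let e_1, …, e_{12} ∈ ℂ, let f(x) = ∏_{m=1}^{12}(x − e_m) = ∑_{k=0}^{12} λ_k x^k with Kleinian 2-polar F(x,z), and for each 6-element subset S of {1,…,12} let Λ^{[S]} be the unique symmetric 5×5 matrix with P_S(x)P_{S^c}(z) + P_S(z)P_{S^c}(x) − F(x,z) = (x−z)² ∑_{i,j=1}^{5} Λ^{[S]}_{ij} x^{i−1} z^{j−1}. Then (1/2) ∑_S Λ^{[S]} = [[210λ_2, 84λ_3, 28λ_4, 7λ_5, λ_6], [84λ_3, 280λ_4, 119λ_5, 38λ_6, 7λ_7], [28λ_4, 119λ_5, 300λ_6, 119λ_7, 28λ_8], [7λ_5, 38λ_6, 119λ_7, 280λ_8, 84λ_9], [λ_6, 7λ_7, 28λ_8, 84λ_9, 210λ_{10}]], the sum running over all 6-element subsets S (equivalently, over the N_5 = 462 unordered partitions {S, S^c}). Moreover, for the particular subset S = {1,2,3,4,5,6}, the entry satisfies Λ^{[S]}_{24} = 2s_6 + 2s̃_6 + s_1 s̃_5 + s_5 s̃_1, where s_j (resp. s̃_j) is the elementary symmetric polynomial of degree j in e_1,…,e_6 (resp.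 e_7,…,e_{12}). -/

import Mathlib

open Finset

/-- The elementary symmetric function of degree `k` in the values `e i`, `i ∈ T`. -/
noncomputable def esymOn {n : ℕ} (T : Finset (Fin n)) (k : ℕ) (e : Fin n → ℂ) : ℂ :=
  ∑ A ∈ Finset.powersetCard k T, ∏ i ∈ A, e i

open Polynomial

lemma esymOn_zero {n : ℕ} (T : Finset (Fin n)) (e : Fin n → ℂ) : esymOn T 0 e = 1 := by
  simp [esymOn]

lemma sum_C_mul_X_pow_coeff (n : ℕ) (c : ℕ → ℂ) {k : ℕ} (hk : k < n) :
    (∑ j ∈ Finset.range n, C (c j) * X ^ j).coeff k = c k := by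
  rw [finset_sum_coeff]
  simp only [coeff_C_mul, coeff_X_pow]
  rw [Finset.sum_eq_single k]
  · simp
  · intro b _ hb
    simp only [mul_ite, mul_one, mul_zero, ite_eq_right_iff]
    exact fun h => absurd h.symm hb
  · intro h; exact absurd (Finset.mem_range.mpr hk) h

lemma coeff_ext {n : ℕ} (c d : ℕ → ℂ)
    (h : ∀ x : ℂ, ∑ k ∈ Finset.range n, c k * x ^ k = ∑ k ∈ Finset.range n, d k * x ^ k)
    {k : ℕ} (hk : k < n) : c k = d k := by
  have hpq : (∑ j ∈ Finset.range n, C (c j) * X ^ j)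
      = ∑ j ∈ Finset.range n, C (d j) * X ^ j := by
    apply Polynomial.funext
    intro r
    simpa [eval_finset_sum] using h r
  have h2 := congrArg (fun p => Polynomial.coeff p k) hpq
  simpa [sum_C_mul_X_pow_coeff n c hk, sum_C_mul_X_pow_coeff n d hk] using h2

lemma vieta_prod {N : ℕ} (e : Fin N → ℂ) (T : Finset (Fin N)) (x : ℂ) :
    ∏ i ∈ T, (x - e i)
      = ∑ k ∈ Finset.range (T.card + 1), (-1) ^ k * esymOn T k e * x ^ (T.card - k) := by
  classical
  have h1 : ∀ i ∈ T, x - e i = (-e i) + x := fun i _ => by ring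
  rw [Finset.prod_congr rfl h1, Finset.prod_add, powerset_card_disjiUnion]
  erw [Finset.sum_disjiUnion]
  refine Finset.sum_congr rfl fun j _ => ?_
  rw [esymOn, Finset.mul_sum, Finset.sum_mul]
  refine Finset.sum_congr rfl fun t ht => ?_
  obtain ⟨hsub, hcard⟩ := Finset.mem_powersetCard.mp ht
  have h2 : ∀ i ∈ t, -e i = (-1) * e i := fun i _ => by ring
  rw [Finset.prod_congr rfl h2, Finset.prod_mul_distrib, Finset.prod_const, hcard,
    Finset.prod_const, Finset.card_sdiff_of_subset hsub, hcard]

lemma poly5_zero (c : Fin 5 → ℂ)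
    (h : ∑ a : Fin 5, C (c a) * X ^ (a : ℕ) = 0) : ∀ a, c a = 0 := by
  intro a
  have h2 := congrArg (fun p => Polynomial.coeff p (a : ℕ)) h
  simp only [finset_sum_coeff, coeff_C_mul, coeff_X_pow, coeff_zero] at h2
  rw [Finset.sum_eq_single a] at h2
  · simpa using h2
  · intro b _ hb
    simp only [mul_ite, mul_one, mul_zero, ite_eq_right_iff]
    exact fun h => absurd (Fin.val_injective h) (Ne.symm hb)
  · intro hmem; exact absurd (Finset.mem_univ a) hmem

lemma bivar_unique (M : Fin 5 → Fin 5 → ℂ)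
    (h : ∀ x z : ℂ, (x - z) ^ 2 * ∑ a : Fin 5, ∑ b : Fin 5, M a b * x ^ (a : ℕ) * z ^ (b : ℕ) = 0) :
    ∀ a b, M a b = 0 := by
  have key : ∀ (z : ℂ) (a : Fin 5), ∑ b : Fin 5, M a b * z ^ (b : ℕ) = 0 := by
    intro z a
    have h2 : ((X - C z) ^ 2 * ∑ a : Fin 5, C (∑ b : Fin 5, M a b * z ^ (b : ℕ)) * X ^ (a : ℕ))
        = 0 := by
      apply Polynomial.funext
      intro x
      have hx := h x z
      have hsw : ∑ a : Fin 5, ∑ b : Fin 5, M a b * x ^ (a : ℕ) * z ^ (b : ℕ)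
          = ∑ a : Fin 5, (∑ b : Fin 5, M a b * z ^ (b : ℕ)) * x ^ (a : ℕ) := by
        refine Finset.sum_congr rfl fun a _ => ?_
        rw [Finset.sum_mul]
        exact Finset.sum_congr rfl fun b _ => by ring
      rw [hsw] at hx
      simpa [eval_finset_sum] using hx
    have hfac : ((X : ℂ[X]) - C z) ^ 2 ≠ 0 := pow_ne_zero _ (X_sub_C_ne_zero z)
    exact poly5_zero _ ((mul_eq_zero.mp h2).resolve_left hfac) a
  intro a b
  have h4 : ∑ bb : Fin 5, C (M a bb) * X ^ (bb : ℕ) = 0 := by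
    apply Polynomial.funext
    intro z
    simpa [eval_finset_sum] using key z a
  exact poly5_zero _ h4 b

lemma coeff_lin_pow (x z : ℂ) (k n : ℕ) :
    ((C x * X + C z) ^ k).coeff n = (k.choose n : ℂ) * x ^ n * z ^ (k - n) := by
  have hexp : (C x * X + C z) ^ k
      = ∑ m ∈ Finset.range (k + 1), C (x ^ m * z ^ (k - m) * (k.choose m : ℂ)) * X ^ m := by
    rw [add_pow]
    refine Finset.sum_congr rfl fun m _ => ?_
    rw [mul_pow, ← C_pow, ← C_pow, ← Polynomial.C_eq_natCast, C_mul, C_mul]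
    ring
  rw [hexp, finset_sum_coeff]
  simp only [coeff_C_mul, coeff_X_pow]
  by_cases hn : n < k + 1
  · rw [Finset.sum_eq_single n]
    · simp; ring
    · intro b _ hb
      simp only [mul_ite, mul_one, mul_zero, ite_eq_right_iff]
      exact fun h => absurd h.symm hb
    · intro hmem; exact absurd (Finset.mem_range.mpr hn) hmem
  · push_neg at hn
    rw [Finset.sum_eq_zero]
    · rw [Nat.choose_eq_zero_of_lt hn]; simp
    · intro b hb
      have hbn : b ≠ n := by have := Finset.mem_range.mp hb; omega
      simp only [mul_ite, mul_one, mul_zero, ite_eq_right_iff]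
      exact fun h => absurd h.symm hbn
noncomputable def gAux (u v : ℕ → ℂ) : ℕ → ℂ := fun k =>
  if k = 0 then u 6 * v 6 else
  if k = 1 then -(u 5 * v 6 + u 6 * v 5) else
  if k = 2 then u 4 * v 6 + u 5 * v 5 + u 6 * v 4 else
  if k = 3 then -(u 3 * v 6 + u 4 * v 5 + u 5 * v 4 + u 6 * v 3) else
  if k = 4 then u 2 * v 6 + u 3 * v 5 + u 4 * v 4 + u 5 * v 3 + u 6 * v 2 else
  if k = 5 then -(u 1 * v 6 + u 2 * v 5 + u 3 * v 4 + u 4 * v 3 + u 5 * v 2 + u 6 * v 1) else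
  if k = 6 then 1 * v 6 + u 1 * v 5 + u 2 * v 4 + u 3 * v 3 + u 4 * v 2 + u 5 * v 1 + u 6 * 1 else
  if k = 7 then -(1 * v 5 + u 1 * v 4 + u 2 * v 3 + u 3 * v 2 + u 4 * v 1 + u 5 * 1) else
  if k = 8 then 1 * v 4 + u 1 * v 3 + u 2 * v 2 + u 3 * v 1 + u 4 * 1 else
  if k = 9 then -(1 * v 3 + u 1 * v 2 + u 2 * v 1 + u 3 * 1) else
  if k = 10 then 1 * v 2 + u 1 * v 1 + u 2 * 1 else
  if k = 11 then -(1 * v 1 + u 1 * 1) else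
  if k = 12 then 1 * 1 else
  0

set_option maxHeartbeats 2000000 in
/-- genus 5, the matrix `Λ_5` of Section 5 together with Example 6.4 of the
paper: summing the partition matrices `Λ^{[S]}` over all 6-element subsets `S` of the
twelve branch indices (twice the `N_5 = 462` unordered partitions) and halving gives the
stated matrix `Λ_5`; moreover for the particular subset `S = {1,…,6}` the entry
`Λ^{[S]}_{24}` equals `2s_6 + 2s̃_6 + s_1 s̃_5 + s_5 s̃_1`, where `s_j` (resp. `s̃_j`)
is the `j`-th elementary symmetric polynomial in `e_1,…,e_6` (resp. `e_7,…,e_{12}`). -/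
theorem genus_five_residual_matrix_sum
    (e : Fin 12 → ℂ)
    (lam : ℕ → ℂ)
    (hlam : ∀ x : ℂ, ∏ m, (x - e m) = ∑ k ∈ Finset.range 13, lam k * x ^ k)
    (F : ℂ → ℂ → ℂ)
    (hF : ∀ x z : ℂ, F x z = 2 * lam 12 * x ^ 6 * z ^ 6
        + ∑ k ∈ Finset.range 6,
            x ^ k * z ^ k * (2 * lam (2 * k) + (x + z) * lam (2 * k + 1)))
    (L : Finset (Fin 12) → Matrix (Fin 5) (Fin 5) ℂ)
    (hLsymm : ∀ S ∈ Finset.powersetCard 6 (Finset.univ : Finset (Fin 12)), (L S).IsSymm)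
    (hL : ∀ S ∈ Finset.powersetCard 6 (Finset.univ : Finset (Fin 12)), ∀ x z : ℂ,
        (∏ i ∈ S, (x - e i)) * (∏ j ∈ Sᶜ, (z - e j))
          + (∏ i ∈ S, (z - e i)) * (∏ j ∈ Sᶜ, (x - e j)) - F x z
        = (x - z) ^ 2 * ∑ a, ∑ b, L S a b * x ^ (a : ℕ) * z ^ (b : ℕ)) :
    (1 / 2 : ℂ) • ∑ S ∈ Finset.powersetCard 6 (Finset.univ : Finset (Fin 12)), L S
      = !![210 * lam 2, 84 * lam 3, 28 * lam 4, 7 * lam 5, lam 6;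
           84 * lam 3, 280 * lam 4, 119 * lam 5, 38 * lam 6, 7 * lam 7;
           28 * lam 4, 119 * lam 5, 300 * lam 6, 119 * lam 7, 28 * lam 8;
           7 * lam 5, 38 * lam 6, 119 * lam 7, 280 * lam 8, 84 * lam 9;
           lam 6, 7 * lam 7, 28 * lam 8, 84 * lam 9, 210 * lam 10]
    ∧ L ({0, 1, 2, 3, 4, 5} : Finset (Fin 12)) 1 3
        = 2 * esymOn ({0, 1, 2, 3, 4, 5} : Finset (Fin 12)) 6 e
          + 2 * esymOn (({0, 1, 2, 3, 4, 5} : Finset (Fin 12))ᶜ) 6 e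
          + esymOn ({0, 1, 2, 3, 4, 5} : Finset (Fin 12)) 1 e
              * esymOn (({0, 1, 2, 3, 4, 5} : Finset (Fin 12))ᶜ) 5 e
          + esymOn ({0, 1, 2, 3, 4, 5} : Finset (Fin 12)) 5 e
              * esymOn (({0, 1, 2, 3, 4, 5} : Finset (Fin 12))ᶜ) 1 e := by
  classical
  have hv3 : ((3 : Fin 5) : ℕ) = 3 := rfl
  have hv4 : ((4 : Fin 5) : ℕ) = 4 := rfl
  set SS : Finset (Fin 12) := ({0, 1, 2, 3, 4, 5} : Finset (Fin 12)) with hSSdef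
  have hSScard : SS.card = 6 := by decide
  have hSSccard : (SSᶜ).card = 6 := by decide
  have hSSmem : SS ∈ Finset.powersetCard 6 (Finset.univ : Finset (Fin 12)) :=
    Finset.mem_powersetCard.mpr ⟨Finset.subset_univ _, hSScard⟩
  have hvs : ∀ x : ℂ, ∏ i ∈ SS, (x - e i)
      = ∑ k ∈ Finset.range (6 + 1), (-1) ^ k * esymOn SS k e * x ^ (6 - k) := by
    intro x; have h := vieta_prod e SS x; rwa [hSScard] at h
  have hvt : ∀ x : ℂ, ∏ i ∈ SSᶜ, (x - e i)
      = ∑ k ∈ Finset.range (6 + 1), (-1) ^ k * esymOn SSᶜ k e * x ^ (6 - k) := by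
    intro x; have h := vieta_prod e SSᶜ x; rwa [hSSccard] at h
  have hmain : ∀ x : ℂ, ∑ k ∈ Finset.range 13, lam k * x ^ k
      = ∑ k ∈ Finset.range 13,
          gAux (fun i => esymOn SS i e) (fun i => esymOn SSᶜ i e) k * x ^ k := by
    intro x
    rw [← hlam x, ← Finset.prod_mul_prod_compl SS (fun i => x - e i), hvs x, hvt x]
    simp only [Finset.sum_range_succ, Finset.sum_range_zero, gAux]
    norm_num [esymOn_zero]
    ring
  have hl0 : lam 0 = esymOn SS 6 e * esymOn SSᶜ 6 e := by
    have h := coeff_ext _ _ hmain (show (0:ℕ) < 13 by norm_num)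
    simp only [gAux] at h
    norm_num at h
    linear_combination h
  have hl1 : lam 1 = -(esymOn SS 5 e * esymOn SSᶜ 6 e + esymOn SS 6 e * esymOn SSᶜ 5 e) := by
    have h := coeff_ext _ _ hmain (show (1:ℕ) < 13 by norm_num)
    simp only [gAux] at h
    norm_num at h
    linear_combination h
  have hl2 : lam 2 = esymOn SS 4 e * esymOn SSᶜ 6 e + esymOn SS 5 e * esymOn SSᶜ 5 e + esymOn SS 6 e * esymOn SSᶜ 4 e := by
    have h := coeff_ext _ _ hmain (show (2:ℕ) < 13 by norm_num)
    simp only [gAux] at h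
    norm_num at h
    linear_combination h
  have hl3 : lam 3 = -(esymOn SS 3 e * esymOn SSᶜ 6 e + esymOn SS 4 e * esymOn SSᶜ 5 e + esymOn SS 5 e * esymOn SSᶜ 4 e + esymOn SS 6 e * esymOn SSᶜ 3 e) := by
    have h := coeff_ext _ _ hmain (show (3:ℕ) < 13 by norm_num)
    simp only [gAux] at h
    norm_num at h
    linear_combination h
  have hl4 : lam 4 = esymOn SS 2 e * esymOn SSᶜ 6 e + esymOn SS 3 e * esymOn SSᶜ 5 e + esymOn SS 4 e * esymOn SSᶜ 4 e + esymOn SS 5 e * esymOn SSᶜ 3 e + esymOn SS 6 e * esymOn SSᶜ 2 e := by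
    have h := coeff_ext _ _ hmain (show (4:ℕ) < 13 by norm_num)
    simp only [gAux] at h
    norm_num at h
    linear_combination h
  have hl5 : lam 5 = -(esymOn SS 1 e * esymOn SSᶜ 6 e + esymOn SS 2 e * esymOn SSᶜ 5 e + esymOn SS 3 e * esymOn SSᶜ 4 e + esymOn SS 4 e * esymOn SSᶜ 3 e + esymOn SS 5 e * esymOn SSᶜ 2 e + esymOn SS 6 e * esymOn SSᶜ 1 e) := by
    have h := coeff_ext _ _ hmain (show (5:ℕ) < 13 by norm_num)
    simp only [gAux] at h
    norm_num at h
    linear_combination h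
  have hl6 : lam 6 = 1 * esymOn SSᶜ 6 e + esymOn SS 1 e * esymOn SSᶜ 5 e + esymOn SS 2 e * esymOn SSᶜ 4 e + esymOn SS 3 e * esymOn SSᶜ 3 e + esymOn SS 4 e * esymOn SSᶜ 2 e + esymOn SS 5 e * esymOn SSᶜ 1 e + esymOn SS 6 e * 1 := by
    have h := coeff_ext _ _ hmain (show (6:ℕ) < 13 by norm_num)
    simp only [gAux] at h
    norm_num at h
    linear_combination h
  have hl7 : lam 7 = -(1 * esymOn SSᶜ 5 e + esymOn SS 1 e * esymOn SSᶜ 4 e + esymOn SS 2 e * esymOn SSᶜ 3 e + esymOn SS 3 e * esymOn SSᶜ 2 e + esymOn SS 4 e * esymOn SSᶜ 1 e + esymOn SS 5 e * 1) := by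
    have h := coeff_ext _ _ hmain (show (7:ℕ) < 13 by norm_num)
    simp only [gAux] at h
    norm_num at h
    linear_combination h
  have hl8 : lam 8 = 1 * esymOn SSᶜ 4 e + esymOn SS 1 e * esymOn SSᶜ 3 e + esymOn SS 2 e * esymOn SSᶜ 2 e + esymOn SS 3 e * esymOn SSᶜ 1 e + esymOn SS 4 e * 1 := by
    have h := coeff_ext _ _ hmain (show (8:ℕ) < 13 by norm_num)
    simp only [gAux] at h
    norm_num at h
    linear_combination h
  have hl9 : lam 9 = -(1 * esymOn SSᶜ 3 e + esymOn SS 1 e * esymOn SSᶜ 2 e + esymOn SS 2 e * esymOn SSᶜ 1 e + esymOn SS 3 e * 1) := by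
    have h := coeff_ext _ _ hmain (show (9:ℕ) < 13 by norm_num)
    simp only [gAux] at h
    norm_num at h
    linear_combination h
  have hl10 : lam 10 = 1 * esymOn SSᶜ 2 e + esymOn SS 1 e * esymOn SSᶜ 1 e + esymOn SS 2 e * 1 := by
    have h := coeff_ext _ _ hmain (show (10:ℕ) < 13 by norm_num)
    simp only [gAux] at h
    norm_num at h
    linear_combination h
  have hl11 : lam 11 = -(1 * esymOn SSᶜ 1 e + esymOn SS 1 e * 1) := by
    have h := coeff_ext _ _ hmain (show (11:ℕ) < 13 by norm_num)
    simp only [gAux] at h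
    norm_num at h
    linear_combination h
  have hl12 : lam 12 = 1 * 1 := by
    have h := coeff_ext _ _ hmain (show (12:ℕ) < 13 by norm_num)
    simp only [gAux] at h
    norm_num at h
    linear_combination h
  -- Part 2 : explicit matrix for SS
  have h2 : ∀ x z : ℂ,
      (∏ i ∈ SS, (x - e i)) * (∏ j ∈ SSᶜ, (z - e j))
        + (∏ i ∈ SS, (z - e i)) * (∏ j ∈ SSᶜ, (x - e j)) - F x z
      = (x - z) ^ 2 * ∑ a : Fin 5, ∑ b : Fin 5,
          (!![(esymOn SS 6 e * esymOn SSᶜ 4 e + esymOn SS 4 e * esymOn SSᶜ 6 e), (-(esymOn SS 6 e * esymOn SSᶜ 3 e) + -(esymOn SS 3 e * esymOn SSᶜ 6 e)), (esymOn SS 6 e * esymOn SSᶜ 2 e + esymOn SS 2 e * esymOn SSᶜ 6 e), (-(esymOn SS 6 e * esymOn SSᶜ 1 e) + -(esymOn SS 1 e * esymOn SSᶜ 6 e)), (esymOn SSᶜ 6 e + esymOn SS 6 e);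
      (-(esymOn SS 6 e * esymOn SSᶜ 3 e) + -(esymOn SS 3 e * esymOn SSᶜ 6 e)), ((2) * esymOn SS 6 e * esymOn SSᶜ 2 e + esymOn SS 5 e * esymOn SSᶜ 3 e + esymOn SS 3 e * esymOn SSᶜ 5 e + (2) * esymOn SS 2 e * esymOn SSᶜ 6 e), ((-2) * esymOn SS 6 e * esymOn SSᶜ 1 e + -(esymOn SS 5 e * esymOn SSᶜ 2 e) + -(esymOn SS 2 e * esymOn SSᶜ 5 e) + (-2) * esymOn SS 1 e * esymOn SSᶜ 6 e), ((2) * esymOn SSᶜ 6 e + (2) * esymOn SS 6 e + esymOn SS 5 e * esymOn SSᶜ 1 e + esymOn SS 1 e * esymOn SSᶜ 5 e), (-(esymOn SSᶜ 5 e) + -(esymOn SS 5 e));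
      (esymOn SS 6 e * esymOn SSᶜ 2 e + esymOn SS 2 e * esymOn SSᶜ 6 e), ((-2) * esymOn SS 6 e * esymOn SSᶜ 1 e + -(esymOn SS 5 e * esymOn SSᶜ 2 e) + -(esymOn SS 2 e * esymOn SSᶜ 5 e) + (-2) * esymOn SS 1 e * esymOn SSᶜ 6 e), ((3) * esymOn SSᶜ 6 e + (3) * esymOn SS 6 e + (2) * esymOn SS 5 e * esymOn SSᶜ 1 e + esymOn SS 4 e * esymOn SSᶜ 2 e + esymOn SS 2 e * esymOn SSᶜ 4 e + (2) * esymOn SS 1 e * esymOn SSᶜ 5 e), ((-2) * esymOn SSᶜ 5 e + (-2) * esymOn SS 5 e + -(esymOn SS 4 e * esymOn SSᶜ 1 e) + -(esymOn SS 1 e * esymOn SSᶜ 4 e)), (esymOn SSᶜ 4 e + esymOn SS 4 e);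
      (-(esymOn SS 6 e * esymOn SSᶜ 1 e) + -(esymOn SS 1 e * esymOn SSᶜ 6 e)), ((2) * esymOn SSᶜ 6 e + (2) * esymOn SS 6 e + esymOn SS 5 e * esymOn SSᶜ 1 e + esymOn SS 1 e * esymOn SSᶜ 5 e), ((-2) * esymOn SSᶜ 5 e + (-2) * esymOn SS 5 e + -(esymOn SS 4 e * esymOn SSᶜ 1 e) + -(esymOn SS 1 e * esymOn SSᶜ 4 e)), ((2) * esymOn SSᶜ 4 e + (2) * esymOn SS 4 e + esymOn SS 3 e * esymOn SSᶜ 1 e + esymOn SS 1 e * esymOn SSᶜ 3 e), (-(esymOn SSᶜ 3 e) + -(esymOn SS 3 e));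
      (esymOn SSᶜ 6 e + esymOn SS 6 e), (-(esymOn SSᶜ 5 e) + -(esymOn SS 5 e)), (esymOn SSᶜ 4 e + esymOn SS 4 e), (-(esymOn SSᶜ 3 e) + -(esymOn SS 3 e)), (esymOn SSᶜ 2 e + esymOn SS 2 e)] : Matrix (Fin 5) (Fin 5) ℂ) a b * x ^ (a : ℕ) * z ^ (b : ℕ) := by
    intro x z
    rw [hF x z, hvs x, hvs z, hvt x, hvt z]
    simp only [Finset.sum_range_succ, Finset.sum_range_zero, Fin.sum_univ_five]
    norm_num [esymOn_zero, hv3, hv4, Matrix.cons_val_two, Matrix.cons_val_three, Matrix.cons_val_four, hl0, hl1, hl2, hl3, hl4, hl5, hl6, hl7, hl8, hl9, hl10, hl11, hl12]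
    ring
  have key2 : ∀ x z : ℂ, (x - z) ^ 2 *
      ∑ a : Fin 5, ∑ b : Fin 5,
        (L SS a b - (!![(esymOn SS 6 e * esymOn SSᶜ 4 e + esymOn SS 4 e * esymOn SSᶜ 6 e), (-(esymOn SS 6 e * esymOn SSᶜ 3 e) + -(esymOn SS 3 e * esymOn SSᶜ 6 e)), (esymOn SS 6 e * esymOn SSᶜ 2 e + esymOn SS 2 e * esymOn SSᶜ 6 e), (-(esymOn SS 6 e * esymOn SSᶜ 1 e) + -(esymOn SS 1 e * esymOn SSᶜ 6 e)), (esymOn SSᶜ 6 e + esymOn SS 6 e);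
      (-(esymOn SS 6 e * esymOn SSᶜ 3 e) + -(esymOn SS 3 e * esymOn SSᶜ 6 e)), ((2) * esymOn SS 6 e * esymOn SSᶜ 2 e + esymOn SS 5 e * esymOn SSᶜ 3 e + esymOn SS 3 e * esymOn SSᶜ 5 e + (2) * esymOn SS 2 e * esymOn SSᶜ 6 e), ((-2) * esymOn SS 6 e * esymOn SSᶜ 1 e + -(esymOn SS 5 e * esymOn SSᶜ 2 e) + -(esymOn SS 2 e * esymOn SSᶜ 5 e) + (-2) * esymOn SS 1 e * esymOn SSᶜ 6 e), ((2) * esymOn SSᶜ 6 e + (2) * esymOn SS 6 e + esymOn SS 5 e * esymOn SSᶜ 1 e + esymOn SS 1 e * esymOn SSᶜ 5 e), (-(esymOn SSᶜ 5 e) + -(esymOn SS 5 e));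
      (esymOn SS 6 e * esymOn SSᶜ 2 e + esymOn SS 2 e * esymOn SSᶜ 6 e), ((-2) * esymOn SS 6 e * esymOn SSᶜ 1 e + -(esymOn SS 5 e * esymOn SSᶜ 2 e) + -(esymOn SS 2 e * esymOn SSᶜ 5 e) + (-2) * esymOn SS 1 e * esymOn SSᶜ 6 e), ((3) * esymOn SSᶜ 6 e + (3) * esymOn SS 6 e + (2) * esymOn SS 5 e * esymOn SSᶜ 1 e + esymOn SS 4 e * esymOn SSᶜ 2 e + esymOn SS 2 e * esymOn SSᶜ 4 e + (2) * esymOn SS 1 e * esymOn SSᶜ 5 e), ((-2) * esymOn SSᶜ 5 e + (-2) * esymOn SS 5 e + -(esymOn SS 4 e * esymOn SSᶜ 1 e) + -(esymOn SS 1 e * esymOn SSᶜ 4 e)), (esymOn SSᶜ 4 e + esymOn SS 4 e);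
      (-(esymOn SS 6 e * esymOn SSᶜ 1 e) + -(esymOn SS 1 e * esymOn SSᶜ 6 e)), ((2) * esymOn SSᶜ 6 e + (2) * esymOn SS 6 e + esymOn SS 5 e * esymOn SSᶜ 1 e + esymOn SS 1 e * esymOn SSᶜ 5 e), ((-2) * esymOn SSᶜ 5 e + (-2) * esymOn SS 5 e + -(esymOn SS 4 e * esymOn SSᶜ 1 e) + -(esymOn SS 1 e * esymOn SSᶜ 4 e)), ((2) * esymOn SSᶜ 4 e + (2) * esymOn SS 4 e + esymOn SS 3 e * esymOn SSᶜ 1 e + esymOn SS 1 e * esymOn SSᶜ 3 e), (-(esymOn SSᶜ 3 e) + -(esymOn SS 3 e));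
      (esymOn SSᶜ 6 e + esymOn SS 6 e), (-(esymOn SSᶜ 5 e) + -(esymOn SS 5 e)), (esymOn SSᶜ 4 e + esymOn SS 4 e), (-(esymOn SSᶜ 3 e) + -(esymOn SS 3 e)), (esymOn SSᶜ 2 e + esymOn SS 2 e)] : Matrix (Fin 5) (Fin 5) ℂ) a b) * x ^ (a : ℕ) * z ^ (b : ℕ) = 0 := by
    intro x z
    have hsplit : ∑ a : Fin 5, ∑ b : Fin 5,
        (L SS a b - (!![(esymOn SS 6 e * esymOn SSᶜ 4 e + esymOn SS 4 e * esymOn SSᶜ 6 e), (-(esymOn SS 6 e * esymOn SSᶜ 3 e) + -(esymOn SS 3 e * esymOn SSᶜ 6 e)), (esymOn SS 6 e * esymOn SSᶜ 2 e + esymOn SS 2 e * esymOn SSᶜ 6 e), (-(esymOn SS 6 e * esymOn SSᶜ 1 e) + -(esymOn SS 1 e * esymOn SSᶜ 6 e)), (esymOn SSᶜ 6 e + esymOn SS 6 e);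
      (-(esymOn SS 6 e * esymOn SSᶜ 3 e) + -(esymOn SS 3 e * esymOn SSᶜ 6 e)), ((2) * esymOn SS 6 e * esymOn SSᶜ 2 e + esymOn SS 5 e * esymOn SSᶜ 3 e + esymOn SS 3 e * esymOn SSᶜ 5 e + (2) * esymOn SS 2 e * esymOn SSᶜ 6 e), ((-2) * esymOn SS 6 e * esymOn SSᶜ 1 e + -(esymOn SS 5 e * esymOn SSᶜ 2 e) + -(esymOn SS 2 e * esymOn SSᶜ 5 e) + (-2) * esymOn SS 1 e * esymOn SSᶜ 6 e), ((2) * esymOn SSᶜ 6 e + (2) * esymOn SS 6 e + esymOn SS 5 e * esymOn SSᶜ 1 e + esymOn SS 1 e * esymOn SSᶜ 5 e), (-(esymOn SSᶜ 5 e) + -(esymOn SS 5 e));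
      (esymOn SS 6 e * esymOn SSᶜ 2 e + esymOn SS 2 e * esymOn SSᶜ 6 e), ((-2) * esymOn SS 6 e * esymOn SSᶜ 1 e + -(esymOn SS 5 e * esymOn SSᶜ 2 e) + -(esymOn SS 2 e * esymOn SSᶜ 5 e) + (-2) * esymOn SS 1 e * esymOn SSᶜ 6 e), ((3) * esymOn SSᶜ 6 e + (3) * esymOn SS 6 e + (2) * esymOn SS 5 e * esymOn SSᶜ 1 e + esymOn SS 4 e * esymOn SSᶜ 2 e + esymOn SS 2 e * esymOn SSᶜ 4 e + (2) * esymOn SS 1 e * esymOn SSᶜ 5 e), ((-2) * esymOn SSᶜ 5 e + (-2) * esymOn SS 5 e + -(esymOn SS 4 e * esymOn SSᶜ 1 e) + -(esymOn SS 1 e * esymOn SSᶜ 4 e)), (esymOn SSᶜ 4 e + esymOn SS 4 e);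
      (-(esymOn SS 6 e * esymOn SSᶜ 1 e) + -(esymOn SS 1 e * esymOn SSᶜ 6 e)), ((2) * esymOn SSᶜ 6 e + (2) * esymOn SS 6 e + esymOn SS 5 e * esymOn SSᶜ 1 e + esymOn SS 1 e * esymOn SSᶜ 5 e), ((-2) * esymOn SSᶜ 5 e + (-2) * esymOn SS 5 e + -(esymOn SS 4 e * esymOn SSᶜ 1 e) + -(esymOn SS 1 e * esymOn SSᶜ 4 e)), ((2) * esymOn SSᶜ 4 e + (2) * esymOn SS 4 e + esymOn SS 3 e * esymOn SSᶜ 1 e + esymOn SS 1 e * esymOn SSᶜ 3 e), (-(esymOn SSᶜ 3 e) + -(esymOn SS 3 e));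
      (esymOn SSᶜ 6 e + esymOn SS 6 e), (-(esymOn SSᶜ 5 e) + -(esymOn SS 5 e)), (esymOn SSᶜ 4 e + esymOn SS 4 e), (-(esymOn SSᶜ 3 e) + -(esymOn SS 3 e)), (esymOn SSᶜ 2 e + esymOn SS 2 e)] : Matrix (Fin 5) (Fin 5) ℂ) a b) * x ^ (a : ℕ) * z ^ (b : ℕ)
        = (∑ a : Fin 5, ∑ b : Fin 5, L SS a b * x ^ (a : ℕ) * z ^ (b : ℕ))
          - ∑ a : Fin 5, ∑ b : Fin 5,
              (!![(esymOn SS 6 e * esymOn SSᶜ 4 e + esymOn SS 4 e * esymOn SSᶜ 6 e), (-(esymOn SS 6 e * esymOn SSᶜ 3 e) + -(esymOn SS 3 e * esymOn SSᶜ 6 e)), (esymOn SS 6 e * esymOn SSᶜ 2 e + esymOn SS 2 e * esymOn SSᶜ 6 e), (-(esymOn SS 6 e * esymOn SSᶜ 1 e) + -(esymOn SS 1 e * esymOn SSᶜ 6 e)), (esymOn SSᶜ 6 e + esymOn SS 6 e);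
      (-(esymOn SS 6 e * esymOn SSᶜ 3 e) + -(esymOn SS 3 e * esymOn SSᶜ 6 e)), ((2) * esymOn SS 6 e * esymOn SSᶜ 2 e + esymOn SS 5 e * esymOn SSᶜ 3 e + esymOn SS 3 e * esymOn SSᶜ 5 e + (2) * esymOn SS 2 e * esymOn SSᶜ 6 e), ((-2) * esymOn SS 6 e * esymOn SSᶜ 1 e + -(esymOn SS 5 e * esymOn SSᶜ 2 e) + -(esymOn SS 2 e * esymOn SSᶜ 5 e) + (-2) * esymOn SS 1 e * esymOn SSᶜ 6 e), ((2) * esymOn SSᶜ 6 e + (2) * esymOn SS 6 e + esymOn SS 5 e * esymOn SSᶜ 1 e + esymOn SS 1 e * esymOn SSᶜ 5 e), (-(esymOn SSᶜ 5 e) + -(esymOn SS 5 e));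
      (esymOn SS 6 e * esymOn SSᶜ 2 e + esymOn SS 2 e * esymOn SSᶜ 6 e), ((-2) * esymOn SS 6 e * esymOn SSᶜ 1 e + -(esymOn SS 5 e * esymOn SSᶜ 2 e) + -(esymOn SS 2 e * esymOn SSᶜ 5 e) + (-2) * esymOn SS 1 e * esymOn SSᶜ 6 e), ((3) * esymOn SSᶜ 6 e + (3) * esymOn SS 6 e + (2) * esymOn SS 5 e * esymOn SSᶜ 1 e + esymOn SS 4 e * esymOn SSᶜ 2 e + esymOn SS 2 e * esymOn SSᶜ 4 e + (2) * esymOn SS 1 e * esymOn SSᶜ 5 e), ((-2) * esymOn SSᶜ 5 e + (-2) * esymOn SS 5 e + -(esymOn SS 4 e * esymOn SSᶜ 1 e) + -(esymOn SS 1 e * esymOn SSᶜ 4 e)), (esymOn SSᶜ 4 e + esymOn SS 4 e);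
      (-(esymOn SS 6 e * esymOn SSᶜ 1 e) + -(esymOn SS 1 e * esymOn SSᶜ 6 e)), ((2) * esymOn SSᶜ 6 e + (2) * esymOn SS 6 e + esymOn SS 5 e * esymOn SSᶜ 1 e + esymOn SS 1 e * esymOn SSᶜ 5 e), ((-2) * esymOn SSᶜ 5 e + (-2) * esymOn SS 5 e + -(esymOn SS 4 e * esymOn SSᶜ 1 e) + -(esymOn SS 1 e * esymOn SSᶜ 4 e)), ((2) * esymOn SSᶜ 4 e + (2) * esymOn SS 4 e + esymOn SS 3 e * esymOn SSᶜ 1 e + esymOn SS 1 e * esymOn SSᶜ 3 e), (-(esymOn SSᶜ 3 e) + -(esymOn SS 3 e));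
      (esymOn SSᶜ 6 e + esymOn SS 6 e), (-(esymOn SSᶜ 5 e) + -(esymOn SS 5 e)), (esymOn SSᶜ 4 e + esymOn SS 4 e), (-(esymOn SSᶜ 3 e) + -(esymOn SS 3 e)), (esymOn SSᶜ 2 e + esymOn SS 2 e)] : Matrix (Fin 5) (Fin 5) ℂ) a b * x ^ (a : ℕ) * z ^ (b : ℕ) := by
      rw [← Finset.sum_sub_distrib]
      refine Finset.sum_congr rfl fun a _ => ?_
      rw [← Finset.sum_sub_distrib]
      exact Finset.sum_congr rfl fun b _ => by ring
    rw [hsplit, mul_sub, ← hL SS hSSmem x z, ← h2 x z]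
    ring
  have hQ := bivar_unique _ key2
  have hpart2 : L SS 1 3
      = 2 * esymOn SS 6 e + 2 * esymOn SSᶜ 6 e
        + esymOn SS 1 e * esymOn SSᶜ 5 e + esymOn SS 5 e * esymOn SSᶜ 1 e := by
    have h13 : L SS 1 3 - (!![(esymOn SS 6 e * esymOn SSᶜ 4 e + esymOn SS 4 e * esymOn SSᶜ 6 e), (-(esymOn SS 6 e * esymOn SSᶜ 3 e) + -(esymOn SS 3 e * esymOn SSᶜ 6 e)), (esymOn SS 6 e * esymOn SSᶜ 2 e + esymOn SS 2 e * esymOn SSᶜ 6 e), (-(esymOn SS 6 e * esymOn SSᶜ 1 e) + -(esymOn SS 1 e * esymOn SSᶜ 6 e)), (esymOn SSᶜ 6 e + esymOn SS 6 e);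
      (-(esymOn SS 6 e * esymOn SSᶜ 3 e) + -(esymOn SS 3 e * esymOn SSᶜ 6 e)), ((2) * esymOn SS 6 e * esymOn SSᶜ 2 e + esymOn SS 5 e * esymOn SSᶜ 3 e + esymOn SS 3 e * esymOn SSᶜ 5 e + (2) * esymOn SS 2 e * esymOn SSᶜ 6 e), ((-2) * esymOn SS 6 e * esymOn SSᶜ 1 e + -(esymOn SS 5 e * esymOn SSᶜ 2 e) + -(esymOn SS 2 e * esymOn SSᶜ 5 e) + (-2) * esymOn SS 1 e * esymOn SSᶜ 6 e), ((2) * esymOn SSᶜ 6 e + (2) * esymOn SS 6 e + esymOn SS 5 e * esymOn SSᶜ 1 e + esymOn SS 1 e * esymOn SSᶜ 5 e), (-(esymOn SSᶜ 5 e) + -(esymOn SS 5 e));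
      (esymOn SS 6 e * esymOn SSᶜ 2 e + esymOn SS 2 e * esymOn SSᶜ 6 e), ((-2) * esymOn SS 6 e * esymOn SSᶜ 1 e + -(esymOn SS 5 e * esymOn SSᶜ 2 e) + -(esymOn SS 2 e * esymOn SSᶜ 5 e) + (-2) * esymOn SS 1 e * esymOn SSᶜ 6 e), ((3) * esymOn SSᶜ 6 e + (3) * esymOn SS 6 e + (2) * esymOn SS 5 e * esymOn SSᶜ 1 e + esymOn SS 4 e * esymOn SSᶜ 2 e + esymOn SS 2 e * esymOn SSᶜ 4 e + (2) * esymOn SS 1 e * esymOn SSᶜ 5 e), ((-2) * esymOn SSᶜ 5 e + (-2) * esymOn SS 5 e + -(esymOn SS 4 e * esymOn SSᶜ 1 e) + -(esymOn SS 1 e * esymOn SSᶜ 4 e)), (esymOn SSᶜ 4 e + esymOn SS 4 e);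
      (-(esymOn SS 6 e * esymOn SSᶜ 1 e) + -(esymOn SS 1 e * esymOn SSᶜ 6 e)), ((2) * esymOn SSᶜ 6 e + (2) * esymOn SS 6 e + esymOn SS 5 e * esymOn SSᶜ 1 e + esymOn SS 1 e * esymOn SSᶜ 5 e), ((-2) * esymOn SSᶜ 5 e + (-2) * esymOn SS 5 e + -(esymOn SS 4 e * esymOn SSᶜ 1 e) + -(esymOn SS 1 e * esymOn SSᶜ 4 e)), ((2) * esymOn SSᶜ 4 e + (2) * esymOn SS 4 e + esymOn SS 3 e * esymOn SSᶜ 1 e + esymOn SS 1 e * esymOn SSᶜ 3 e), (-(esymOn SSᶜ 3 e) + -(esymOn SS 3 e));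
      (esymOn SSᶜ 6 e + esymOn SS 6 e), (-(esymOn SSᶜ 5 e) + -(esymOn SS 5 e)), (esymOn SSᶜ 4 e + esymOn SS 4 e), (-(esymOn SSᶜ 3 e) + -(esymOn SS 3 e)), (esymOn SSᶜ 2 e + esymOn SS 2 e)] : Matrix (Fin 5) (Fin 5) ℂ) 1 3 = 0 := hQ 1 3
    norm_num [Matrix.cons_val_three, Matrix.cons_val_four] at h13
    linear_combination h13
  -- Part 1
  have h924 : (Finset.powersetCard 6 (Finset.univ : Finset (Fin 12))).card = 924 := by
    rw [Finset.card_powersetCard, Finset.card_univ]; decide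
  have hxz : ∀ x z : ℂ,
      ∑ T ∈ Finset.powersetCard 6 (Finset.univ : Finset (Fin 12)),
        (∏ i ∈ T, (x - e i)) * ∏ j ∈ Tᶜ, (z - e j)
      = ∑ k ∈ Finset.range 13, lam k *
          ∑ i ∈ Finset.range 7, (k.choose i : ℂ) * (((12 - k).choose (6 - i) : ℕ) : ℂ)
            * x ^ i * z ^ (k - i) := by
    intro x z
    have hB : ∀ u : ℂ, ∏ m : Fin 12, ((x - e m) * u + (z - e m))
        = ∑ k ∈ Finset.range 13, lam k * ((x * u + z) ^ k * (u + 1) ^ (12 - k)) := by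
      intro u
      by_cases hu : u = -1
      · subst hu
        have hlhs : ∏ m : Fin 12, ((x - e m) * (-1) + (z - e m)) = (z - x) ^ 12 := by
          rw [Finset.prod_congr rfl
              (fun m _ => show (x - e m) * (-1) + (z - e m) = z - x by ring),
            Finset.prod_const]
          norm_num
        rw [hlhs]
        simp only [Finset.sum_range_succ, Finset.sum_range_zero]
        norm_num [hl12]
        ring
      · have hu1 : u + 1 ≠ 0 := fun hc => hu (by linear_combination hc)
        have hfac : ∀ m : Fin 12,
            (x - e m) * u + (z - e m) = (u + 1) * ((x * u + z) / (u + 1) - e m) := by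
          intro m; field_simp; ring
        rw [Finset.prod_congr rfl (fun m _ => hfac m), Finset.prod_mul_distrib,
          Finset.prod_const, hlam ((x * u + z) / (u + 1)), Finset.mul_sum]
        have hc12 : (Finset.univ : Finset (Fin 12)).card = 12 := by simp
        rw [hc12]
        refine Finset.sum_congr rfl fun k hk => ?_
        have hk' : k ≤ 12 := Nat.lt_succ_iff.mp (Finset.mem_range.mp hk)
        have hpow : (u + 1) ^ (12 - k) * (u + 1) ^ k = (u + 1) ^ 12 := by
          rw [← pow_add]; congr 1; omega
        calc (u + 1) ^ 12 * (lam k * ((x * u + z) / (u + 1)) ^ k)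
            = lam k * (x * u + z) ^ k * ((u + 1) ^ (12 - k) * ((u + 1) ^ k / (u + 1) ^ k)) := by
              rw [div_pow, ← hpow]; ring
          _ = lam k * ((x * u + z) ^ k * (u + 1) ^ (12 - k)) := by
              rw [div_self (pow_ne_zero k hu1)]; ring
    have hpq : (∑ j ∈ Finset.range 13, C (∑ T ∈ Finset.powersetCard j Finset.univ,
          (∏ i ∈ T, (x - e i)) * ∏ jj ∈ Tᶜ, (z - e jj)) * X ^ j)
        = ∑ k ∈ Finset.range 13, C (lam k) *
            ((C x * X + C z) ^ k * (X + 1) ^ (12 - k)) := by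
      apply Polynomial.funext
      intro u
      have hA : ∏ m : Fin 12, ((x - e m) * u + (z - e m))
          = ∑ j ∈ Finset.range 13, (∑ T ∈ Finset.powersetCard j Finset.univ,
              (∏ i ∈ T, (x - e i)) * ∏ jj ∈ Tᶜ, (z - e jj)) * u ^ j := by
        rw [Finset.prod_add, powerset_card_disjiUnion]
        erw [Finset.sum_disjiUnion]
        refine Finset.sum_congr (by norm_num) fun j _ => ?_
        rw [Finset.sum_mul]
        refine Finset.sum_congr rfl fun T hT => ?_
        obtain ⟨-, hc⟩ := Finset.mem_powersetCard.mp hT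
        rw [Finset.prod_mul_distrib, Finset.prod_const, hc, Finset.compl_eq_univ_sdiff]
        ring
      have he1 : Polynomial.eval u (∑ j ∈ Finset.range 13,
          C (∑ T ∈ Finset.powersetCard j Finset.univ,
            (∏ i ∈ T, (x - e i)) * ∏ jj ∈ Tᶜ, (z - e jj)) * X ^ j)
          = ∑ j ∈ Finset.range 13, (∑ T ∈ Finset.powersetCard j Finset.univ,
              (∏ i ∈ T, (x - e i)) * ∏ jj ∈ Tᶜ, (z - e jj)) * u ^ j := by
        simp only [eval_finset_sum, eval_mul, eval_pow, eval_C, eval_X]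
      have he2 : Polynomial.eval u (∑ k ∈ Finset.range 13, C (lam k) *
            ((C x * X + C z) ^ k * (X + 1) ^ (12 - k)))
          = ∑ k ∈ Finset.range 13, lam k * ((x * u + z) ^ k * (u + 1) ^ (12 - k)) := by
        simp only [eval_finset_sum, eval_mul, eval_pow, eval_add, eval_one, eval_C, eval_X]
      rw [he1, he2, ← hA, ← hB u]
    have hco := congrArg (fun p => Polynomial.coeff p 6) hpq
    rw [sum_C_mul_X_pow_coeff 13 _ (show (6:ℕ) < 13 by norm_num)] at hco
    rw [hco, Polynomial.finset_sum_coeff]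
    refine Finset.sum_congr rfl fun k hk => ?_
    rw [Polynomial.coeff_C_mul, Polynomial.coeff_mul,
      Finset.Nat.sum_antidiagonal_eq_sum_range_succ_mk]
    congr 1
    refine Finset.sum_congr (by norm_num) fun i _ => ?_
    rw [coeff_lin_pow, Polynomial.coeff_X_add_one_pow]
    ring
  have hIDM : ∀ x z : ℂ,
      (∑ T ∈ Finset.powersetCard 6 (Finset.univ : Finset (Fin 12)),
        (∏ i ∈ T, (x - e i)) * ∏ j ∈ Tᶜ, (z - e j))
      + (∑ T ∈ Finset.powersetCard 6 (Finset.univ : Finset (Fin 12)),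
        (∏ i ∈ T, (z - e i)) * ∏ j ∈ Tᶜ, (x - e j))
      - 924 * F x z
      = (x - z) ^ 2 * ∑ a : Fin 5, ∑ b : Fin 5,
          (2 * (!![210 * lam 2, 84 * lam 3, 28 * lam 4, 7 * lam 5, lam 6;
           84 * lam 3, 280 * lam 4, 119 * lam 5, 38 * lam 6, 7 * lam 7;
           28 * lam 4, 119 * lam 5, 300 * lam 6, 119 * lam 7, 28 * lam 8;
           7 * lam 5, 38 * lam 6, 119 * lam 7, 280 * lam 8, 84 * lam 9;
           lam 6, 7 * lam 7, 28 * lam 8, 84 * lam 9, 210 * lam 10] : Matrix (Fin 5) (Fin 5) ℂ) a b) * x ^ (a : ℕ) * z ^ (b : ℕ) := by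
    intro x z
    rw [hxz x z, hxz z x, hF x z]
    simp only [Finset.sum_range_succ, Finset.sum_range_zero, Fin.sum_univ_five]
    norm_num [Nat.choose, hv3, hv4, Matrix.cons_val_two, Matrix.cons_val_three, Matrix.cons_val_four]
    ring
  have key1 : ∀ x z : ℂ, (x - z) ^ 2 * ∑ a : Fin 5, ∑ b : Fin 5,
      ((∑ S ∈ Finset.powersetCard 6 (Finset.univ : Finset (Fin 12)), L S) a b
        - 2 * (!![210 * lam 2, 84 * lam 3, 28 * lam 4, 7 * lam 5, lam 6;
           84 * lam 3, 280 * lam 4, 119 * lam 5, 38 * lam 6, 7 * lam 7;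
           28 * lam 4, 119 * lam 5, 300 * lam 6, 119 * lam 7, 28 * lam 8;
           7 * lam 5, 38 * lam 6, 119 * lam 7, 280 * lam 8, 84 * lam 9;
           lam 6, 7 * lam 7, 28 * lam 8, 84 * lam 9, 210 * lam 10] : Matrix (Fin 5) (Fin 5) ℂ) a b) * x ^ (a : ℕ) * z ^ (b : ℕ) = 0 := by
    intro x z
    have hsplit : ∑ a : Fin 5, ∑ b : Fin 5,
        ((∑ S ∈ Finset.powersetCard 6 (Finset.univ : Finset (Fin 12)), L S) a b
          - 2 * (!![210 * lam 2, 84 * lam 3, 28 * lam 4, 7 * lam 5, lam 6;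
           84 * lam 3, 280 * lam 4, 119 * lam 5, 38 * lam 6, 7 * lam 7;
           28 * lam 4, 119 * lam 5, 300 * lam 6, 119 * lam 7, 28 * lam 8;
           7 * lam 5, 38 * lam 6, 119 * lam 7, 280 * lam 8, 84 * lam 9;
           lam 6, 7 * lam 7, 28 * lam 8, 84 * lam 9, 210 * lam 10] : Matrix (Fin 5) (Fin 5) ℂ) a b) * x ^ (a : ℕ) * z ^ (b : ℕ)
        = (∑ a : Fin 5, ∑ b : Fin 5,
            (∑ S ∈ Finset.powersetCard 6 (Finset.univ : Finset (Fin 12)), L S) a b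
              * x ^ (a : ℕ) * z ^ (b : ℕ))
          - ∑ a : Fin 5, ∑ b : Fin 5,
              (2 * (!![210 * lam 2, 84 * lam 3, 28 * lam 4, 7 * lam 5, lam 6;
           84 * lam 3, 280 * lam 4, 119 * lam 5, 38 * lam 6, 7 * lam 7;
           28 * lam 4, 119 * lam 5, 300 * lam 6, 119 * lam 7, 28 * lam 8;
           7 * lam 5, 38 * lam 6, 119 * lam 7, 280 * lam 8, 84 * lam 9;
           lam 6, 7 * lam 7, 28 * lam 8, 84 * lam 9, 210 * lam 10] : Matrix (Fin 5) (Fin 5) ℂ) a b) * x ^ (a : ℕ) * z ^ (b : ℕ) := by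
      rw [← Finset.sum_sub_distrib]
      refine Finset.sum_congr rfl fun a _ => ?_
      rw [← Finset.sum_sub_distrib]
      exact Finset.sum_congr rfl fun b _ => by ring
    have hswap : ∑ a : Fin 5, ∑ b : Fin 5,
        (∑ S ∈ Finset.powersetCard 6 (Finset.univ : Finset (Fin 12)), L S) a b
          * x ^ (a : ℕ) * z ^ (b : ℕ)
        = ∑ S ∈ Finset.powersetCard 6 (Finset.univ : Finset (Fin 12)),
            ∑ a : Fin 5, ∑ b : Fin 5, L S a b * x ^ (a : ℕ) * z ^ (b : ℕ) := by
      simp only [Matrix.sum_apply, Finset.sum_mul]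
      exact (Finset.sum_congr rfl fun a _ => Finset.sum_comm).trans Finset.sum_comm
    have hLs : ∑ S ∈ Finset.powersetCard 6 (Finset.univ : Finset (Fin 12)),
          ((x - z) ^ 2 * ∑ a : Fin 5, ∑ b : Fin 5, L S a b * x ^ (a : ℕ) * z ^ (b : ℕ))
        = (∑ T ∈ Finset.powersetCard 6 (Finset.univ : Finset (Fin 12)),
            (∏ i ∈ T, (x - e i)) * ∏ j ∈ Tᶜ, (z - e j))
          + (∑ T ∈ Finset.powersetCard 6 (Finset.univ : Finset (Fin 12)),
            (∏ i ∈ T, (z - e i)) * ∏ j ∈ Tᶜ, (x - e j))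
          - 924 * F x z := by
      rw [Finset.sum_congr rfl fun S hS => (hL S hS x z).symm]
      rw [Finset.sum_sub_distrib, Finset.sum_add_distrib, Finset.sum_const, h924]
      norm_num
    rw [hsplit, mul_sub, hswap, Finset.mul_sum, hLs, hIDM x z]
    ring
  have hM := bivar_unique _ key1
  constructor
  · ext a b
    have hab : (∑ S ∈ Finset.powersetCard 6 (Finset.univ : Finset (Fin 12)), L S) a b
        - 2 * (!![210 * lam 2, 84 * lam 3, 28 * lam 4, 7 * lam 5, lam 6;
           84 * lam 3, 280 * lam 4, 119 * lam 5, 38 * lam 6, 7 * lam 7;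
           28 * lam 4, 119 * lam 5, 300 * lam 6, 119 * lam 7, 28 * lam 8;
           7 * lam 5, 38 * lam 6, 119 * lam 7, 280 * lam 8, 84 * lam 9;
           lam 6, 7 * lam 7, 28 * lam 8, 84 * lam 9, 210 * lam 10] : Matrix (Fin 5) (Fin 5) ℂ) a b = 0 := hM a b
    rw [Matrix.smul_apply, smul_eq_mul]
    linear_combination hab / 2
  · exact hpart2
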